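/- Let q ∈ ℂ with 0 < |q| < 1 and let t ∈ ℂ, t ≠ 0, with t not an integer power of q. Then the function z(t) = A_{q²}(−q³t²) / θ_q(−q²t) satisfies the q-difference equation −z(q²t) + (1/(q²t))·z(qt) + z(t) = 0. -/

import Mathlib

open scoped BigOperators

/-- The finite q-Pochhammer symbol `(a;q)_n`. -/
noncomputable def qPoch (q a : ℂ) (n : ℕ) : ℂ := ∏ j ∈ Finset.range n, (1 - a * q ^ j)

/-- The Jacobi theta function `θ_q(x)`. -/
noncomputable def jTheta (q x : ℂ) : ℂ := ∑' n : ℤ, q ^ (n * (n - 1) / 2) * x ^ n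

/-- `z(t) = A_{q²}(−q³t²) / θ_q(−q²t)`. -/
noncomputable def zRam (q t : ℂ) : ℂ :=
  (∑' n : ℕ, q ^ (2 * n ^ 2) * (q ^ 3 * t ^ 2) ^ n / qPoch (q ^ 2) (q ^ 2) n) /
    jTheta q (-(q ^ 2 * t))

lemma absq2_lt_one (q : ℂ) (hq1 : ‖q‖ < 1) : ‖q‖ ^ 2 < 1 :=
  pow_lt_one₀ (norm_nonneg q) hq1 (by omega)

lemma factor_ne (q : ℂ) (hq1 : ‖q‖ < 1) (k : ℕ) :
    (1 : ℂ) - q ^ 2 * (q ^ 2) ^ k ≠ 0 := by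
  have habs : ‖q ^ 2 * (q ^ 2) ^ k‖ < 1 := by
    rw [← pow_succ', norm_pow, norm_pow]
    exact pow_lt_one₀ (by positivity) (absq2_lt_one q hq1) (Nat.succ_ne_zero k)
  intro h
  have : q ^ 2 * (q ^ 2) ^ k = 1 := by linear_combination -h
  rw [this] at habs
  simp at habs

lemma qPoch_ne_zero (q : ℂ) (hq1 : ‖q‖ < 1) (n : ℕ) :
    qPoch (q ^ 2) (q ^ 2) n ≠ 0 := by
  rw [qPoch]
  exact Finset.prod_ne_zero_iff.mpr fun j _ => factor_ne q hq1 j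

noncomputable def gR (q y : ℂ) (n : ℕ) : ℂ :=
  q ^ (2 * n ^ 2) * y ^ n / qPoch (q ^ 2) (q ^ 2) n

lemma gR_succ (q y : ℂ) (hq1 : ‖q‖ < 1) (n : ℕ) :
    gR q y (n + 1) = gR q y n * (q ^ (4 * n + 2) * y / (1 - q ^ 2 * (q ^ 2) ^ n)) := by
  have hP := qPoch_ne_zero q hq1 n
  have hF := factor_ne q hq1 n
  have he : 2 * (n + 1) ^ 2 = 2 * n ^ 2 + (4 * n + 2) := by ring
  unfold gR
  rw [qPoch, Finset.prod_range_succ, ← qPoch, he, pow_add, pow_succ y]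
  field_simp

lemma summable_gR (q : ℂ) (hq1 : ‖q‖ < 1) (y : ℂ) :
    Summable (gR q y) := by
  have haq := norm_nonneg q
  have h2 := absq2_lt_one q hq1
  apply summable_of_ratio_norm_eventually_le (r := 1/2) (by norm_num)
  have hten : Filter.Tendsto (fun n : ℕ => ‖q‖ ^ n) Filter.atTop (nhds 0) :=
    tendsto_pow_atTop_nhds_zero_of_lt_one haq hq1
  have hεpos : 0 < (1 - ‖q‖ ^ 2) / (2 * (‖y‖ + 1)) := by
    have hy0 := norm_nonneg y
    apply div_pos (by linarith) (by linarith)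
  filter_upwards [hten.eventually (gt_mem_nhds hεpos)] with n hn
  rw [gR_succ q y hq1 n, norm_mul]
  have hy := norm_nonneg y
  have hne : ‖q‖ ^ (4 * n + 2) ≤ ‖q‖ ^ n :=
    pow_le_pow_of_le_one haq hq1.le (by omega)
  have hnum : ‖q ^ (4 * n + 2) * y‖ ≤ (1 - ‖q‖ ^ 2) / 2 := by
    rw [norm_mul, norm_pow]
    have h1 : ‖q‖ ^ (4 * n + 2) * ‖y‖
        ≤ ‖q‖ ^ n * (‖y‖ + 1) := by
      apply mul_le_mul hne (by linarith) hy (by positivity)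
    have h2' : ‖q‖ ^ n * (‖y‖ + 1)
        ≤ (1 - ‖q‖ ^ 2) / (2 * (‖y‖ + 1)) * (‖y‖ + 1) := by
      apply mul_le_mul_of_nonneg_right hn.le (by linarith)
    have h3 : (1 - ‖q‖ ^ 2) / (2 * (‖y‖ + 1)) * (‖y‖ + 1)
        = (1 - ‖q‖ ^ 2) / 2 := by
      field_simp
    linarith [h1, h2', h3]
  have hden : 1 - ‖q‖ ^ 2 ≤ ‖1 - q ^ 2 * (q ^ 2) ^ n‖ := by
    have h1 : ‖q ^ 2 * (q ^ 2) ^ n‖ ≤ ‖q‖ ^ 2 := by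
      rw [← pow_succ', norm_pow, norm_pow]
      simpa using pow_le_pow_of_le_one (by positivity) h2.le (show 1 ≤ n + 1 by omega)
    calc 1 - ‖q‖ ^ 2 ≤ 1 - ‖q ^ 2 * (q ^ 2) ^ n‖ := by linarith
      _ ≤ ‖1 - q ^ 2 * (q ^ 2) ^ n‖ := by
          have := norm_sub_norm_le (1 : ℂ) (q ^ 2 * (q ^ 2) ^ n)
          simpa using this
  have hdpos : 0 < ‖1 - q ^ 2 * (q ^ 2) ^ n‖ := by linarith
  have hratio : ‖q ^ (4 * n + 2) * y / (1 - q ^ 2 * (q ^ 2) ^ n)‖ ≤ 1 / 2 := by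
    rw [norm_div]
    rw [div_le_iff₀ (by simpa using hdpos)]
    nlinarith
  calc ‖gR q y n‖ * ‖q ^ (4 * n + 2) * y / (1 - q ^ 2 * (q ^ 2) ^ n)‖
      ≤ ‖gR q y n‖ * (1 / 2) := by
        exact mul_le_mul_of_nonneg_left hratio (norm_nonneg _)
    _ = 1 / 2 * ‖gR q y n‖ := by ring

noncomputable def Dq (q y : ℂ) : ℕ → ℂ
  | 0 => 0
  | n + 1 => q ^ 2 * y * gR q (q ^ 4 * y) n

lemma gR_term (q : ℂ) (hq1 : ‖q‖ < 1) (y : ℂ) (n : ℕ) :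
    gR q y n = gR q (q ^ 2 * y) n + Dq q y n := by
  cases n with
  | zero => simp [gR, Dq, qPoch]
  | succ n =>
    have hP := qPoch_ne_zero q hq1 n
    have hF := factor_ne q hq1 n
    show gR q y (n + 1) = gR q (q ^ 2 * y) (n + 1) + q ^ 2 * y * gR q (q ^ 4 * y) n
    unfold gR
    rw [qPoch, Finset.prod_range_succ, ← qPoch]
    field_simp
    ring

lemma gR_rec (q : ℂ) (hq1 : ‖q‖ < 1) (y : ℂ) :
    ∑' n, gR q y n =
      (∑' n, gR q (q ^ 2 * y) n) + q ^ 2 * y * ∑' n, gR q (q ^ 4 * y) n := by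
  have hB := summable_gR q hq1 (q ^ 2 * y)
  have hC := summable_gR q hq1 (q ^ 4 * y)
  have hD : Summable (Dq q y) := by
    apply (summable_nat_add_iff 1).mp
    simpa [Dq] using hC.mul_left (q ^ 2 * y)
  calc ∑' n, gR q y n = ∑' n, (gR q (q ^ 2 * y) n + Dq q y n) :=
        tsum_congr (gR_term q hq1 y)
    _ = (∑' n, gR q (q ^ 2 * y) n) + ∑' n, Dq q y n := hB.tsum_add hD
    _ = (∑' n, gR q (q ^ 2 * y) n) + q ^ 2 * y * ∑' n, gR q (q ^ 4 * y) n := by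
        rw [hD.tsum_eq_zero_add]
        simp [Dq, tsum_mul_left]

lemma theta_shift (q x : ℂ) (hq : q ≠ 0) (hx : x ≠ 0) :
    jTheta q x = x * jTheta q (q * x) := by
  have h1 : jTheta q x = ∑' n : ℤ, q ^ ((n + 1) * (n + 1 - 1) / 2) * x ^ (n + 1) := by
    rw [jTheta]
    exact ((Equiv.addRight (1 : ℤ)).tsum_eq
      (fun n : ℤ => q ^ (n * (n - 1) / 2) * x ^ n)).symm
  rw [h1, jTheta, ← tsum_mul_left]
  congr 1
  funext n
  have hexp : (n + 1) * (n + 1 - 1) / 2 = n * (n - 1) / 2 + n := by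
    have h2 : (n + 1) * (n + 1 - 1) = n * (n - 1) + n * 2 := by ring
    rw [h2, Int.add_mul_ediv_right _ _ two_ne_zero]
  rw [hexp, zpow_add₀ hq, zpow_add₀ hx n 1, mul_zpow, zpow_one]
  ring

lemma zRam_eq (q t : ℂ) :
    zRam q t = (∑' n, gR q (q ^ 3 * t ^ 2) n) / jTheta q (-(q ^ 2 * t)) := rfl

theorem zRam_qDifference_equation (q : ℂ) (hq0 : 0 < ‖q‖)
    (hq1 : ‖q‖ < 1) (t : ℂ) (ht : t ≠ 0) (htq : ∀ m : ℤ, t ≠ q ^ m) :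
    -zRam q (q ^ 2 * t) + 1 / (q ^ 2 * t) * zRam q (q * t) + zRam q t = 0 := by
  have hq : q ≠ 0 := by
    intro h; rw [h] at hq0; simp at hq0
  have hx0 : -(q ^ 2 * t) ≠ 0 := by simp [hq, ht]
  have hx1 : -(q ^ 3 * t) ≠ 0 := by simp [hq, ht]
  rw [zRam_eq, zRam_eq, zRam_eq]
  have e1 : q ^ 3 * (q * t) ^ 2 = q ^ 5 * t ^ 2 := by ring
  have e2 : q ^ 3 * (q ^ 2 * t) ^ 2 = q ^ 7 * t ^ 2 := by ring
  have e3 : -(q ^ 2 * (q * t)) = -(q ^ 3 * t) := by ring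
  have e4 : -(q ^ 2 * (q ^ 2 * t)) = -(q ^ 4 * t) := by ring
  rw [e1, e2, e3, e4]
  have hθ1 : jTheta q (-(q ^ 2 * t)) = -(q ^ 2 * t) * jTheta q (-(q ^ 3 * t)) := by
    have h := theta_shift q (-(q ^ 2 * t)) hq hx0
    have e : q * -(q ^ 2 * t) = -(q ^ 3 * t) := by ring
    rw [e] at h
    exact h
  have hθ2 : jTheta q (-(q ^ 3 * t)) = -(q ^ 3 * t) * jTheta q (-(q ^ 4 * t)) := by
    have h := theta_shift q (-(q ^ 3 * t)) hq hx1
    have e : q * -(q ^ 3 * t) = -(q ^ 4 * t) := by ring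
    rw [e] at h
    exact h
  have hrec := gR_rec q hq1 (q ^ 3 * t ^ 2)
  have e5 : q ^ 2 * (q ^ 3 * t ^ 2) = q ^ 5 * t ^ 2 := by ring
  have e6 : q ^ 4 * (q ^ 3 * t ^ 2) = q ^ 7 * t ^ 2 := by ring
  rw [e5, e6] at hrec
  by_cases hz : jTheta q (-(q ^ 4 * t)) = 0
  · simp [hθ1, hθ2, hz]
  · rw [hrec, hθ1, hθ2]
    set θ := jTheta q (-(q ^ 4 * t))
    set S1 := ∑' (n : ℕ), gR q (q ^ 5 * t ^ 2) n with hS1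
    set S2 := ∑' (n : ℕ), gR q (q ^ 7 * t ^ 2) n with hS2
    have h5 : (q ^ 5 * t ^ 2 : ℂ) ≠ 0 := by simp [hq, ht]
    have d3 : -(q ^ 2 * t) * (-(q ^ 3 * t) * θ) = q ^ 5 * t ^ 2 * θ := by ring
    have d2 : q ^ 2 * t * (-(q ^ 3 * t) * θ) = -(q ^ 5 * t ^ 2 * θ) := by ring
    rw [d3]
    have ht2 : 1 / (q ^ 2 * t) * (S1 / (-(q ^ 3 * t) * θ)) = -(S1 / (q ^ 5 * t ^ 2 * θ)) := by
      rw [div_mul_div_comm, d2, div_neg, one_mul]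
    have ht1 : S2 / θ = q ^ 5 * t ^ 2 * S2 / (q ^ 5 * t ^ 2 * θ) :=
      (mul_div_mul_left S2 θ h5).symm
    rw [ht2, ht1, add_div]
    ring
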